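/- Let J = ⟨g₁,…,gₙ⟩ be a grid ideal in P (each gᵢ a monic univariate polynomial in xᵢ of degree dᵢ ≥ 1), let s = (d₁−1,…,dₙ−1) be the exponent vector of t_soc(J) = x₁^{d₁−1}···xₙ^{dₙ−1}, let I₁, I₂ be ideals of P with I₁ ∩ I₂ = J and I₁ + I₂ = (1), and let σ be a monomial order. Then the map t ↦ s − t (componentwise subtraction) is a bijection from the set {t : t ≤ s componentwise and X^t ∈ LT_σ(I₁)} onto the set {u : X^u ∉ LT_σ(I₂)}. -/

import Mathlib

set_option maxHeartbeats 1000000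
open MvPolynomial

/-- The leading monomial (σ-largest exponent vector in the support) of a polynomial. -/
noncomputable def leadMonomial {n : ℕ} {K : Type*} [Field K]
    (m : MonomialOrder (Fin n)) (f : MvPolynomial (Fin n) K) : Fin n →₀ ℕ :=
  m.toSyn.symm (f.support.sup fun s => m.toSyn s)

/-- The leading term ideal of an ideal. -/
noncomputable def leadTermIdeal {n : ℕ} {K : Type*} [Field K]
    (m : MonomialOrder (Fin n)) (I : Ideal (MvPolynomial (Fin n) K)) :
    Ideal (MvPolynomial (Fin n) K) :=
  Ideal.span {g | ∃ f ∈ I, f ≠ 0 ∧ g = monomial (leadMonomial m f) (1 : K)}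

namespace SocleAux

variable {n : ℕ} {K : Type*} [Field K] {m : MonomialOrder (Fin n)}

lemma toSyn_leadMonomial (m : MonomialOrder (Fin n)) (f : MvPolynomial (Fin n) K) :
    m.toSyn (leadMonomial m f) = f.support.sup fun a => m.toSyn a := by
  simp [leadMonomial]

lemma leadMonomial_mem {f : MvPolynomial (Fin n) K} (hf : f ≠ 0) :
    leadMonomial m f ∈ f.support := by
  obtain ⟨a, ha, hsup⟩ := Finset.exists_mem_eq_sup f.support
    (MvPolynomial.support_nonempty.mpr hf) (fun a => m.toSyn a)
  rw [leadMonomial, hsup]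
  simpa using ha

lemma coeff_leadMonomial_ne_zero {f : MvPolynomial (Fin n) K} (hf : f ≠ 0) :
    coeff (leadMonomial m f) f ≠ 0 :=
  mem_support_iff.mp (leadMonomial_mem hf)

lemma le_leadMonomial {f : MvPolynomial (Fin n) K} {a : Fin n →₀ ℕ} (ha : a ∈ f.support) :
    m.toSyn a ≤ m.toSyn (leadMonomial m f) := by
  rw [toSyn_leadMonomial]
  exact Finset.le_sup ha

lemma leadMonomial_monomial {t : Fin n →₀ ℕ} {c : K} (hc : c ≠ 0) :
    leadMonomial m (monomial t c) = t := by
  classical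
  rw [leadMonomial, support_monomial, if_neg hc, Finset.sup_singleton]
  exact m.toSyn.symm_apply_apply t

lemma coeff_add_leadMonomial_mul {f g : MvPolynomial (Fin n) K} (hf : f ≠ 0) (hg : g ≠ 0) :
    coeff (leadMonomial m f + leadMonomial m g) (f * g)
      = coeff (leadMonomial m f) f * coeff (leadMonomial m g) g := by
  rw [coeff_mul]
  apply Finset.sum_eq_single (leadMonomial m f, leadMonomial m g)
  · rintro ⟨a, b⟩ hab hne
    rw [Finset.HasAntidiagonal.mem_antidiagonal] at hab
    by_contra hc
    have ha : a ∈ f.support := by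
      rw [mem_support_iff]; intro h0; exact hc (by simp [h0])
    have hb : b ∈ g.support := by
      rw [mem_support_iff]; intro h0; exact hc (by simp [h0])
    have h1 : m.toSyn a ≤ m.toSyn (leadMonomial m f) := le_leadMonomial ha
    have h2 : m.toSyn b ≤ m.toSyn (leadMonomial m g) := le_leadMonomial hb
    have hsum : m.toSyn a + m.toSyn b
        = m.toSyn (leadMonomial m f) + m.toSyn (leadMonomial m g) := by
      rw [← map_add, ← map_add, hab]
    have ea : m.toSyn a = m.toSyn (leadMonomial m f) := by
      by_contra hne'
      have : m.toSyn a + m.toSyn b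
          < m.toSyn (leadMonomial m f) + m.toSyn (leadMonomial m g) :=
        add_lt_add_of_lt_of_le (lt_of_le_of_ne h1 hne') h2
      exact absurd hsum this.ne
    have eb : m.toSyn b = m.toSyn (leadMonomial m g) := by
      have := hsum
      rw [ea] at this
      exact add_left_cancel this
    exact hne (Prod.ext (m.toSyn.injective ea) (m.toSyn.injective eb))
  · simp

lemma leadMonomial_mul {f g : MvPolynomial (Fin n) K} (hf : f ≠ 0) (hg : g ≠ 0) :
    leadMonomial m (f * g) = leadMonomial m f + leadMonomial m g := by
  classical
  have hmem : leadMonomial m f + leadMonomial m g ∈ (f * g).support := by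
    rw [mem_support_iff, coeff_add_leadMonomial_mul hf hg]
    exact mul_ne_zero (coeff_leadMonomial_ne_zero hf) (coeff_leadMonomial_ne_zero hg)
  apply m.toSyn.injective
  apply le_antisymm
  · rw [toSyn_leadMonomial]
    apply Finset.sup_le
    intro b hb
    obtain ⟨a1, ha1, a2, ha2, rfl⟩ := Finset.mem_add.mp (MvPolynomial.support_mul f g hb)
    simp only [map_add]
    exact add_le_add (le_leadMonomial ha1) (le_leadMonomial ha2)
  · exact le_leadMonomial hmem

lemma mem_leadTermIdeal_iff {I : Ideal (MvPolynomial (Fin n) K)} {u : Fin n →₀ ℕ} :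
    monomial u (1 : K) ∈ leadTermIdeal m I
      ↔ ∃ f ∈ I, f ≠ 0 ∧ leadMonomial m f ≤ u := by
  classical
  have hset : {p | ∃ f ∈ I, f ≠ 0 ∧ p = monomial (leadMonomial m f) (1 : K)}
      = (fun a => monomial a (1 : K)) '' {a | ∃ f ∈ I, f ≠ 0 ∧ leadMonomial m f = a} := by
    ext p
    constructor
    · rintro ⟨f, hf, hf0, rfl⟩; exact ⟨_, ⟨f, hf, hf0, rfl⟩, rfl⟩
    · rintro ⟨a, ⟨f, hf, hf0, rfl⟩, rfl⟩; exact ⟨f, hf, hf0, rfl⟩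
  rw [leadTermIdeal, hset, mem_ideal_span_monomial_image]
  have hsupp : (monomial u (1 : K)).support = {u} := by
    rw [support_monomial, if_neg one_ne_zero]
  rw [hsupp]
  constructor
  · intro H
    obtain ⟨a, ⟨f, hf, hf0, rfl⟩, hle⟩ := H u (Finset.mem_singleton_self u)
    exact ⟨f, hf, hf0, hle⟩
  · rintro ⟨f, hf, hf0, hle⟩ x hx
    rw [Finset.mem_singleton] at hx
    subst hx
    exact ⟨_, ⟨f, hf, hf0, rfl⟩, hle⟩

/-! grid generator facts -/

lemma grid_eq_sum (h : Polynomial K) (i : Fin n) :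
    (Polynomial.aeval (X i : MvPolynomial (Fin n) K) h)
      = ∑ k ∈ Finset.range (h.natDegree + 1), monomial (Finsupp.single i k) (h.coeff k) := by
  rw [Polynomial.aeval_eq_sum_range]
  apply Finset.sum_congr rfl
  intro k _
  rw [X_pow_eq_monomial, smul_monomial, smul_eq_mul, mul_one]

lemma grid_coeff_top {h : Polynomial K} (hm : h.Monic) (i : Fin n) :
    coeff (Finsupp.single i h.natDegree) (Polynomial.aeval (X i : MvPolynomial (Fin n) K) h)
      = 1 := by
  classical
  rw [grid_eq_sum, coeff_sum]
  rw [Finset.sum_eq_single h.natDegree]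
  · rw [coeff_monomial, if_pos rfl]
    exact hm.coeff_natDegree
  · intro k _ hk
    rw [coeff_monomial, if_neg]
    intro he
    exact hk (Finsupp.single_injective i he)
  · intro hmem
    exact absurd (Finset.self_mem_range_succ _) hmem

lemma grid_support_le {h : Polynomial K} (i : Fin n) {a : Fin n →₀ ℕ}
    (ha : a ∈ (Polynomial.aeval (X i : MvPolynomial (Fin n) K) h).support) :
    a ≤ Finsupp.single i h.natDegree := by
  classical
  rw [mem_support_iff, grid_eq_sum, coeff_sum] at ha
  obtain ⟨k, hk, hne⟩ := Finset.exists_ne_zero_of_sum_ne_zero ha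
  rw [coeff_monomial] at hne
  by_cases he : Finsupp.single i k = a
  · subst he
    refine Finsupp.single_le_iff.mpr ?_
    rw [Finsupp.single_eq_same]
    exact Nat.lt_succ_iff.mp (Finset.mem_range.mp hk)
  · exact absurd (if_neg he) hne

lemma grid_ne_zero {h : Polynomial K} (hm : h.Monic) (i : Fin n) :
    (Polynomial.aeval (X i : MvPolynomial (Fin n) K) h) ≠ 0 := by
  intro h0
  have := grid_coeff_top (n := n) hm i
  rw [h0, coeff_zero] at this
  exact one_ne_zero this.symm

lemma leadMonomial_grid {h : Polynomial K} (hm : h.Monic) (i : Fin n)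
    (m : MonomialOrder (Fin n)) :
    leadMonomial m (Polynomial.aeval (X i : MvPolynomial (Fin n) K) h)
      = Finsupp.single i h.natDegree := by
  apply m.toSyn.injective
  apply le_antisymm
  · rw [toSyn_leadMonomial]
    apply Finset.sup_le
    intro a ha
    exact m.toSyn_monotone (grid_support_le i ha)
  · apply le_leadMonomial
    rw [mem_support_iff, grid_coeff_top hm]
    exact one_ne_zero


/-! independence of box monomials modulo the grid ideal -/

lemma indep_aux {K : Type*} [Field K] :
    ∀ (n : ℕ) (h : Fin n → Polynomial K), (∀ i, (h i).Monic) → (∀ i, 1 ≤ (h i).natDegree) →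
      ∀ p : MvPolynomial (Fin n) K,
        p ∈ Ideal.span (Set.range fun i => Polynomial.aeval (X i) (h i)) →
        (∀ u ∈ p.support, ∀ i, u i < (h i).natDegree) → p = 0 := by
  intro n
  induction n with
  | zero =>
    intro h _ _ p hp _
    have he : (Set.range fun i : Fin 0 =>
        Polynomial.aeval (X i : MvPolynomial (Fin 0) K) (h i)) = ∅ :=
      Set.range_eq_empty _
    rw [he, Ideal.span_empty, Ideal.mem_bot] at hp
    exact hp
  | succ n ih =>
    intro h hmonic hdeg p hp hsupp
    classical
    set h' : Fin n → Polynomial K := fun i => h i.succ with hh'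
    set J' : Ideal (MvPolynomial (Fin n) K) :=
      Ideal.span (Set.range fun i => Polynomial.aeval (X i) (h' i)) with hJ'
    have hne_top : J' ≠ ⊤ := by
      intro htop
      have h1 : (1 : MvPolynomial (Fin n) K) ∈ J' := htop ▸ Submodule.mem_top
      have h10 := ih h' (fun i => hmonic _) (fun i => hdeg _) 1 h1 ?_
      · exact one_ne_zero h10
      · intro u hu i
        have hu0 : u = 0 := by
          by_contra hne
          have := mem_support_iff.mp hu
          rw [MvPolynomial.coeff_one, if_neg (fun he => hne he.symm)] at this
          exact this rfl
        rw [hu0]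
        simp only [Finsupp.coe_zero, Pi.zero_apply]
        exact lt_of_lt_of_le Nat.zero_lt_one (hdeg _)
    haveI : Nontrivial (MvPolynomial (Fin n) K ⧸ J') := Ideal.Quotient.nontrivial_iff.mpr hne_top
    set S := MvPolynomial (Fin n) K ⧸ J' with hS
    set π : MvPolynomial (Fin n) K →ₐ[K] S := Ideal.Quotient.mkₐ K J' with hπ
    set ψ : MvPolynomial (Fin (n + 1)) K →ₐ[K] Polynomial S :=
      (Polynomial.mapAlgHom π).comp (MvPolynomial.finSuccEquiv K n).toAlgHom with hψ
    set H : Polynomial S := (h 0).map (algebraMap K S) with hH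
    have hHmonic : H.Monic := (hmonic 0).map _
    have hψX0 : ψ (X 0) = Polynomial.X := by
      simp [hψ, MvPolynomial.finSuccEquiv_X_zero]
    have hψXsucc : ∀ i : Fin n, ψ (X i.succ) = Polynomial.C (π (X i)) := by
      intro i
      simp [hψ, MvPolynomial.finSuccEquiv_X_succ]
    have hψg0 : ψ (Polynomial.aeval (X 0) (h 0)) = H := by
      have e1 := Polynomial.aeval_algHom_apply ψ (X 0) (h 0)
      rw [hψX0] at e1
      rw [← e1, hH, ← Polynomial.aeval_map_algebraMap S, Polynomial.aeval_X_left_apply]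
    have hψgsucc : ∀ i : Fin n, ψ (Polynomial.aeval (X i.succ) (h i.succ)) = 0 := by
      intro i
      have e1 := Polynomial.aeval_algHom_apply ψ (X i.succ) (h i.succ)
      rw [hψXsucc] at e1
      rw [← e1]
      have e2 := Polynomial.aeval_algHom_apply (Polynomial.CAlgHom (R := K) (A := S))
        (π (X i)) (h i.succ)
      have e3 := Polynomial.aeval_algHom_apply π (X i) (h i.succ)
      rw [show (Polynomial.C (π (X i)) : Polynomial S)
          = (Polynomial.CAlgHom (R := K) (A := S)) (π (X i)) from rfl, e2, e3]
      have hmem : Polynomial.aeval (X i : MvPolynomial (Fin n) K) (h i.succ) ∈ J' := by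
        rw [hJ']
        exact Ideal.subset_span ⟨i, rfl⟩
      have hzero : π (Polynomial.aeval (X i : MvPolynomial (Fin n) K) (h i.succ)) = 0 := by
        rw [hπ, Ideal.Quotient.mkₐ_eq_mk, Ideal.Quotient.eq_zero_iff_mem]
        exact hmem
      rw [hzero, map_zero]
    -- ψ p lies in the principal ideal (H)
    have hmem : ψ p ∈ Ideal.span {H} := by
      have h1 : ψ p ∈ Ideal.map ψ
          (Ideal.span (Set.range fun i => Polynomial.aeval (X i) (h i))) :=
        Ideal.mem_map_of_mem _ hp
      rw [Ideal.map_span] at h1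
      refine Ideal.span_le.mpr ?_ h1
      rintro _ ⟨_, ⟨i, rfl⟩, rfl⟩
      induction i using Fin.cases with
      | zero => rw [hψg0]; exact Ideal.subset_span rfl
      | succ i => rw [hψgsucc]; exact Ideal.zero_mem _
    set q := (MvPolynomial.finSuccEquiv K n) p with hq
    have hcoeff : ∀ k, (ψ p).coeff k = Ideal.Quotient.mk J' (q.coeff k) := by
      intro k
      have hψq : ψ p = q.map (Ideal.Quotient.mk J') := rfl
      rw [hψq, Polynomial.coeff_map]
    have hqc : ∀ k, (h 0).natDegree ≤ k → q.coeff k = 0 := by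
      intro k hk
      rw [MvPolynomial.eq_zero_iff]
      intro u
      rw [hq, MvPolynomial.finSuccEquiv_coeff_coeff]
      by_contra hne
      have := hsupp _ (mem_support_iff.mpr hne) 0
      rw [Finsupp.cons_zero] at this
      omega
    have hdegψ : (ψ p).degree < H.degree := by
      have hHdeg : H.degree = ((h 0).natDegree : ℕ) := by
        rw [hH, (hmonic 0).degree_map]
        exact Polynomial.degree_eq_natDegree (hmonic 0).ne_zero
      rw [hHdeg, Polynomial.degree_lt_iff_coeff_zero]
      intro k hk
      rw [hcoeff k, hqc k (by exact_mod_cast hk), map_zero]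
    have hψp0 : ψ p = 0 := by
      obtain ⟨c, hc⟩ := (Ideal.mem_span_singleton (α := Polynomial S)).mp hmem
      by_contra hne
      have hc0 : c ≠ 0 := by
        intro h0; rw [h0, mul_zero] at hc; exact hne hc
      have : H.degree ≤ (ψ p).degree := by
        rw [hc, hHmonic.degree_mul_comm c, hHmonic.degree_mul]
        exact le_add_of_nonneg_left (Polynomial.zero_le_degree_iff.mpr hc0)
      exact absurd hdegψ (not_lt.mpr this)
    have hq0 : ∀ k, q.coeff k = 0 := by
      intro k
      have hmemJ' : q.coeff k ∈ J' := by
        rw [← Ideal.Quotient.eq_zero_iff_mem, ← hcoeff k, hψp0, Polynomial.coeff_zero]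
      refine ih h' (fun i => hmonic _) (fun i => hdeg _) _ hmemJ' ?_
      intro u hu i
      rw [mem_support_iff, hq, MvPolynomial.finSuccEquiv_coeff_coeff] at hu
      have := hsupp _ (mem_support_iff.mpr hu) i.succ
      rwa [Finsupp.cons_succ] at this
    have : q = 0 := Polynomial.ext fun k => by rw [hq0 k, Polynomial.coeff_zero]
    have : (MvPolynomial.finSuccEquiv K n) p = 0 := by rw [← hq]; exact this
    simpa using (MvPolynomial.finSuccEquiv K n).injective (by simpa using this)


/-! the reduction step -/

section Grid

variable {h : Fin n → Polynomial K} {d : Fin n → ℕ} {g : Fin n → MvPolynomial (Fin n) K}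
  {J : Ideal (MvPolynomial (Fin n) K)}

/-- The set of "bad" monomials in the support of `f`. -/
noncomputable def badF (d : Fin n → ℕ) (f : MvPolynomial (Fin n) K) : Finset (Fin n →₀ ℕ) :=
  f.support.filter (fun a => ∃ i, d i ≤ a i)

lemma box_indep (hmonic : ∀ i, (h i).Monic) (hdeg : ∀ i, (h i).natDegree = d i)
    (hd : ∀ i, 1 ≤ d i) (hg : ∀ i, g i = Polynomial.aeval (X i) (h i))
    (hJ : J = Ideal.span (Set.range g)) {f : MvPolynomial (Fin n) K} (hfJ : f ∈ J)
    (hbox : ∀ u ∈ f.support, ∀ i, u i < d i) : f = 0 := by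
  have hr : Set.range g = Set.range fun i => Polynomial.aeval (X i) (h i) := by
    rw [show g = fun i => Polynomial.aeval (X i) (h i) from funext hg]
  exact indep_aux n h hmonic (fun i => (hdeg i) ▸ hd i) f (by rwa [hJ, hr] at hfJ)
    (fun u hu i => (hdeg i) ▸ hbox u hu i)

lemma exists_step (hmonic : ∀ i, (h i).Monic) (hdeg : ∀ i, (h i).natDegree = d i)
    (hd : ∀ i, 1 ≤ d i)
    (hg : ∀ i, g i = Polynomial.aeval (X i) (h i)) (hJ : J = Ideal.span (Set.range g))
    (m : MonomialOrder (Fin n)) {f : MvPolynomial (Fin n) K}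
    (hBne : (badF d f).Nonempty) :
    ∃ (a : Fin n →₀ ℕ) (t : MvPolynomial (Fin n) K),
      a ∈ f.support ∧ (∃ i, d i ≤ a i) ∧ (badF d f).sup m.toSyn = m.toSyn a ∧
      t ∈ J ∧ t ≠ 0 ∧ leadMonomial m t = a ∧ coeff a (f - t) = 0 ∧
      (badF d (f - t)).sup m.toSyn < m.toSyn a := by
  classical
  obtain ⟨a, haB, hamax⟩ := Finset.exists_mem_eq_sup (badF d f) hBne m.toSyn
  have haf : a ∈ f.support := (Finset.mem_filter.mp haB).1
  obtain ⟨i, hdi⟩ : ∃ i, d i ≤ a i := (Finset.mem_filter.mp haB).2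
  set δ : Fin n →₀ ℕ := Finsupp.single i (d i) with hδ
  have hδa : δ ≤ a := by
    rw [hδ]
    exact Finsupp.single_le_iff.mpr hdi
  set c := coeff a f with hc
  have hc0 : c ≠ 0 := mem_support_iff.mp haf
  have hgne : g i ≠ 0 := by rw [hg]; exact grid_ne_zero (hmonic i) i
  have hLMg : leadMonomial m (g i) = δ := by
    rw [hg, leadMonomial_grid (hmonic i) i m, hdeg, hδ]
  have hcg : coeff δ (g i) = 1 := by
    rw [hg, hδ, ← hdeg i]
    exact grid_coeff_top (hmonic i) i
  set t : MvPolynomial (Fin n) K := monomial (a - δ) c * g i with ht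
  have hmne : (monomial (a - δ) c : MvPolynomial (Fin n) K) ≠ 0 := by
    intro h0
    rw [monomial_eq_zero] at h0
    exact hc0 h0
  have htne : t ≠ 0 := mul_ne_zero hmne hgne
  have htJ : t ∈ J := by
    rw [ht]
    exact J.mul_mem_left _ (hJ ▸ Ideal.subset_span ⟨i, rfl⟩)
  have hLMt : leadMonomial m t = a := by
    rw [ht, leadMonomial_mul hmne hgne, leadMonomial_monomial hc0, hLMg,
      tsub_add_cancel_of_le hδa]
  have hta : coeff a t = c := by
    have hkey := MvPolynomial.coeff_monomial_mul δ (a - δ) c (g i)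
    rw [tsub_add_cancel_of_le hδa, hcg, mul_one] at hkey
    rw [ht, hkey]
  have hcoeff0 : coeff a (f - t) = 0 := by
    rw [MvPolynomial.coeff_sub, hta, ← hc, sub_self]
  have ha0 : a ≠ 0 := by
    intro h0
    rw [h0] at hdi
    simp only [Finsupp.coe_zero, Pi.zero_apply, Nat.le_zero] at hdi
    have := hd i
    omega
  refine ⟨a, t, haf, ⟨i, hdi⟩, hamax, htJ, htne, hLMt, hcoeff0, ?_⟩
  have hbot : (⊥ : m.syn) < m.toSyn a := by
    rw [MonomialOrder.bot_eq_zero, ← map_zero m.toSyn]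
    apply lt_of_le_of_ne (m.toSyn_monotone (zero_le : (0 : Fin n →₀ ℕ) ≤ a))
    intro he
    exact ha0 (m.toSyn.injective he).symm
  rw [Finset.sup_lt_iff hbot]
  intro u huB
  have hu' : u ∈ (f - t).support := (Finset.mem_filter.mp huB).1
  have hubad : ∃ j, d j ≤ u j := (Finset.mem_filter.mp huB).2
  have hune : u ≠ a := by
    intro he
    subst he
    exact mem_support_iff.mp hu' hcoeff0
  rcases Finset.mem_union.mp (MvPolynomial.support_sub _ f t hu') with h1 | h2
  · have huBf : u ∈ badF d f := Finset.mem_filter.mpr ⟨h1, hubad⟩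
    have hle : m.toSyn u ≤ m.toSyn a := hamax ▸ Finset.le_sup huBf
    exact lt_of_le_of_ne hle (fun he => hune (m.toSyn.injective he))
  · have hle : m.toSyn u ≤ m.toSyn a := hLMt ▸ le_leadMonomial h2
    exact lt_of_le_of_ne hle (fun he => hune (m.toSyn.injective he))


lemma groebner_prop (hmonic : ∀ i, (h i).Monic) (hdeg : ∀ i, (h i).natDegree = d i)
    (hd : ∀ i, 1 ≤ d i) (hg : ∀ i, g i = Polynomial.aeval (X i) (h i))
    (hJ : J = Ideal.span (Set.range g)) (m : MonomialOrder (Fin n)) :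
    ∀ f ∈ J, f ≠ 0 → ∃ i, d i ≤ leadMonomial m f i := by
  classical
  suffices H : ∀ b : m.syn, ∀ f ∈ J, f ≠ 0 → (badF d f).sup m.toSyn = b →
      ∃ i, d i ≤ leadMonomial m f i by
    intro f hf hf0
    exact H _ f hf hf0 rfl
  intro b
  induction b using WellFoundedLT.induction with
  | _ b IH =>
    intro f hfJ hf0 hsup
    by_cases hLM : ∃ i, d i ≤ leadMonomial m f i
    · exact hLM
    push_neg at hLM
    have hBne : (badF d f).Nonempty := by
      rw [Finset.nonempty_iff_ne_empty]
      intro hne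
      apply hf0
      refine box_indep hmonic hdeg hd hg hJ hfJ ?_
      intro u hu i
      by_contra hge
      push_neg at hge
      have : u ∈ badF d f := Finset.mem_filter.mpr ⟨hu, ⟨i, hge⟩⟩
      rw [hne] at this
      exact absurd this (Finset.notMem_empty u)
    obtain ⟨a, t, haf, hbad, hamax, htJ, htne, hLMt, hcoeff0, hdec⟩ :=
      exists_step hmonic hdeg hd hg hJ m hBne
    set f' := f - t with hf'
    have hf'J : f' ∈ J := J.sub_mem hfJ htJ
    have haLM : a ≠ leadMonomial m f := by
      intro he
      obtain ⟨i, hi⟩ := hbad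
      rw [he] at hi
      exact absurd (hLM i) (not_lt.mpr hi)
    have haltLM : m.toSyn a < m.toSyn (leadMonomial m f) :=
      lt_of_le_of_ne (le_leadMonomial haf) (fun he => haLM (m.toSyn.injective he))
    have hcLM : coeff (leadMonomial m f) f' = coeff (leadMonomial m f) f := by
      rw [hf', MvPolynomial.coeff_sub]
      have h0 : coeff (leadMonomial m f) t = 0 := by
        by_contra hne
        have := le_leadMonomial (m := m) (mem_support_iff.mpr hne)
        rw [hLMt] at this
        exact absurd this (not_le.mpr haltLM)
      rw [h0, sub_zero]
    have hf'0 : f' ≠ 0 := by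
      intro h0
      apply coeff_leadMonomial_ne_zero (m := m) hf0
      rw [← hcLM, h0, coeff_zero]
    have hLMf' : leadMonomial m f' = leadMonomial m f := by
      apply m.toSyn.injective
      apply le_antisymm
      · rw [toSyn_leadMonomial]
        apply Finset.sup_le
        intro u hu
        rcases Finset.mem_union.mp (MvPolynomial.support_sub _ f t hu) with h1 | h2
        · exact le_leadMonomial h1
        · have := le_leadMonomial (m := m) h2
          rw [hLMt] at this
          exact le_trans this haltLM.le
      · apply le_leadMonomial
        rw [mem_support_iff, hcLM]
        exact coeff_leadMonomial_ne_zero hf0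
    have hb : (badF d f').sup m.toSyn < b := by
      rw [← hsup, hamax]
      exact hdec
    obtain ⟨j, hj⟩ := IH _ hb f' hf'J hf'0 rfl
    exact ⟨j, by rwa [hLMf'] at hj⟩

lemma reduce_box (hmonic : ∀ i, (h i).Monic) (hdeg : ∀ i, (h i).natDegree = d i)
    (hd : ∀ i, 1 ≤ d i) (hg : ∀ i, g i = Polynomial.aeval (X i) (h i))
    (hJ : J = Ideal.span (Set.range g)) (m : MonomialOrder (Fin n)) :
    ∀ f : MvPolynomial (Fin n) K, ∃ r, (∀ u ∈ r.support, ∀ i, u i < d i) ∧ f - r ∈ J := by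
  classical
  suffices H : ∀ b : m.syn, ∀ f : MvPolynomial (Fin n) K, (badF d f).sup m.toSyn = b →
      ∃ r, (∀ u ∈ r.support, ∀ i, u i < d i) ∧ f - r ∈ J by
    intro f
    exact H _ f rfl
  intro b
  induction b using WellFoundedLT.induction with
  | _ b IH =>
    intro f hsup
    by_cases hBne : (badF d f).Nonempty
    · obtain ⟨a, t, haf, hbad, hamax, htJ, htne, hLMt, hcoeff0, hdec⟩ :=
        exists_step hmonic hdeg hd hg hJ m hBne
      have hb : (badF d (f - t)).sup m.toSyn < b := by
        rw [← hsup, hamax]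
        exact hdec
      obtain ⟨r, hrbox, hrJ⟩ := IH _ hb (f - t) rfl
      refine ⟨r, hrbox, ?_⟩
      have : f - r = (f - t - r) + t := by ring
      rw [this]
      exact J.add_mem hrJ htJ
    · refine ⟨f, ?_, by rw [sub_self]; exact J.zero_mem⟩
      intro u hu i
      by_contra hge
      push_neg at hge
      exact hBne ⟨u, Finset.mem_filter.mpr ⟨hu, ⟨i, hge⟩⟩⟩

end Grid

end SocleAux

/-- For complementary ideals `I₁, I₂` with respect to a grid ideal `J`, the map
`t ↦ s - t` (where `s` is the exponent vector of the socle monomial of `J`) is a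
bijection from the monomials under `s` lying in `LT_σ(I₁)` onto the monomials
outside `LT_σ(I₂)`. -/
theorem complementary_ideals_socle_bijection
    {n : ℕ} {K : Type*} [Field K]
    (h : Fin n → Polynomial K) (d : Fin n → ℕ)
    (hmonic : ∀ i, (h i).Monic) (hdeg : ∀ i, (h i).natDegree = d i)
    (hd : ∀ i, 1 ≤ d i)
    (g : Fin n → MvPolynomial (Fin n) K)
    (hg : ∀ i, g i = Polynomial.aeval (X i) (h i))
    (J : Ideal (MvPolynomial (Fin n) K)) (hJ : J = Ideal.span (Set.range g))
    (s : Fin n →₀ ℕ) (hs : ∀ i, s i = d i - 1)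
    (I₁ I₂ : Ideal (MvPolynomial (Fin n) K))
    (hinf : I₁ ⊓ I₂ = J) (hsup : I₁ + I₂ = ⊤)
    (m : MonomialOrder (Fin n)) :
    Set.BijOn (fun t => s - t)
      {t : Fin n →₀ ℕ | t ≤ s ∧ monomial t (1 : K) ∈ leadTermIdeal m I₁}
      {u : Fin n →₀ ℕ | monomial u (1 : K) ∉ leadTermIdeal m I₂} := by
  classical
  have hJ1 : J ≤ I₁ := hinf ▸ inf_le_left
  have hJ2 : J ≤ I₂ := hinf ▸ inf_le_right
  have hgroebner := SocleAux.groebner_prop hmonic hdeg hd hg hJ m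
  have hreduce := SocleAux.reduce_box hmonic hdeg hd hg hJ m
  have hbox_iff : ∀ u : Fin n →₀ ℕ, u ≤ s ↔ ∀ i, u i < d i := by
    intro u
    rw [Finsupp.le_def]
    constructor
    · intro hle i
      have h1 := hle i
      have h2 := hd i
      rw [hs i] at h1
      omega
    · intro hlt i
      have h1 := hlt i
      rw [hs i]
      omega
  -- monomials outside the box are in every leading term ideal of an ideal containing J
  have hout : ∀ u : Fin n →₀ ℕ, ¬ u ≤ s → ∀ I : Ideal (MvPolynomial (Fin n) K), J ≤ I →
      monomial u (1 : K) ∈ leadTermIdeal m I := by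
    intro u hu I hJI
    rw [SocleAux.mem_leadTermIdeal_iff]
    have hex : ∃ i, d i ≤ u i := by
      by_contra hc
      push_neg at hc
      exact hu ((hbox_iff u).mpr hc)
    obtain ⟨i, hi⟩ := hex
    have hδu : Finsupp.single i (d i) ≤ u := Finsupp.single_le_iff.mpr hi
    have hgne : g i ≠ 0 := by rw [hg]; exact SocleAux.grid_ne_zero (hmonic i) i
    have hLMg : leadMonomial m (g i) = Finsupp.single i (d i) := by
      rw [hg, SocleAux.leadMonomial_grid (hmonic i) i m, hdeg]
    have hmne : (monomial (u - Finsupp.single i (d i)) (1 : K)) ≠ 0 := by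
      intro h0
      rw [monomial_eq_zero] at h0
      exact one_ne_zero h0
    refine ⟨monomial (u - Finsupp.single i (d i)) (1 : K) * g i, ?_, mul_ne_zero hmne hgne, ?_⟩
    · exact hJI (J.mul_mem_left _ (hJ ▸ Ideal.subset_span ⟨i, rfl⟩))
    · rw [SocleAux.leadMonomial_mul hmne hgne, SocleAux.leadMonomial_monomial one_ne_zero,
        hLMg, tsub_add_cancel_of_le hδu]
  -- the key exclusion
  have hE : ∀ t : Fin n →₀ ℕ, t ≤ s → monomial t (1 : K) ∈ leadTermIdeal m I₁ →
      monomial (s - t) (1 : K) ∈ leadTermIdeal m I₂ → False := by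
    intro t hts h1 h2
    obtain ⟨f₁, hf₁I, hf₁0, hLM1⟩ := SocleAux.mem_leadTermIdeal_iff.mp h1
    obtain ⟨f₂, hf₂I, hf₂0, hLM2⟩ := SocleAux.mem_leadTermIdeal_iff.mp h2
    have hprod : f₁ * f₂ ∈ J := by
      rw [← hinf]
      exact Submodule.mem_inf.mpr ⟨I₁.mul_mem_right _ hf₁I, I₂.mul_mem_left _ hf₂I⟩
    obtain ⟨i, hi⟩ := hgroebner _ hprod (mul_ne_zero hf₁0 hf₂0)
    rw [SocleAux.leadMonomial_mul hf₁0 hf₂0] at hi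
    have h1i := Finsupp.le_def.mp hLM1 i
    have h2i := Finsupp.le_def.mp hLM2 i
    have hsti : (s - t) i = s i - t i := Finsupp.tsub_apply s t i
    have htsi := Finsupp.le_def.mp hts i
    have haddi : (leadMonomial m f₁ + leadMonomial m f₂) i
        = leadMonomial m f₁ i + leadMonomial m f₂ i := Finsupp.add_apply _ _ i
    have hsi := hs i
    have hdi := hd i
    omega
  -- finsets
  set boxF : Finset (Fin n →₀ ℕ) := Finset.Iic s with hboxF
  set SM1 : Finset (Fin n →₀ ℕ) :=
    boxF.filter (fun t => ¬ monomial t (1 : K) ∈ leadTermIdeal m I₁) with hSM1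
  set SM2 : Finset (Fin n →₀ ℕ) :=
    boxF.filter (fun t => ¬ monomial t (1 : K) ∈ leadTermIdeal m I₂) with hSM2
  set AF : Finset (Fin n →₀ ℕ) :=
    boxF.filter (fun t => monomial t (1 : K) ∈ leadTermIdeal m I₁) with hAF
  -- spanning
  have hspan : ∀ I : Ideal (MvPolynomial (Fin n) K), J ≤ I →
      Submodule.span K ((fun t => Ideal.Quotient.mkₐ K I (monomial t (1 : K))) ''
        (boxF : Set (Fin n →₀ ℕ))) = ⊤ := by
    intro I hJI
    rw [eq_top_iff]
    rintro x -
    obtain ⟨f, rfl⟩ := Ideal.Quotient.mkₐ_surjective K I x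
    obtain ⟨r, hrbox, hfr⟩ := hreduce f
    have heq : Ideal.Quotient.mkₐ K I f = Ideal.Quotient.mkₐ K I r := by
      exact Ideal.Quotient.eq.mpr (hJI hfr)
    rw [heq, ← MvPolynomial.support_sum_monomial_coeff r, map_sum]
    apply Submodule.sum_mem
    intro u hu
    have hmon : (Ideal.Quotient.mkₐ K I) (monomial u (coeff u r))
        = (coeff u r) • (Ideal.Quotient.mkₐ K I) (monomial u (1 : K)) := by
      rw [← map_smul]
      congr 1
      rw [MvPolynomial.smul_monomial, smul_eq_mul, mul_one]
    rw [hmon]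
    apply Submodule.smul_mem
    apply Submodule.subset_span
    refine ⟨u, ?_, rfl⟩
    rw [hboxF]
    simp only [Finset.coe_Iic, Set.mem_Iic]
    exact (hbox_iff u).mpr (hrbox u hu)
  have hfin : ∀ I : Ideal (MvPolynomial (Fin n) K), J ≤ I →
      Module.Finite K (MvPolynomial (Fin n) K ⧸ I) := by
    intro I hJI
    refine ⟨⟨boxF.image (fun t => Ideal.Quotient.mkₐ K I (monomial t (1 : K))), ?_⟩⟩
    rw [Finset.coe_image]
    exact hspan I hJI
  -- cardinality versus finrank
  have hcard : ∀ I : Ideal (MvPolynomial (Fin n) K), J ≤ I → ∀ SM : Finset (Fin n →₀ ℕ),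
      (∀ u ∈ SM, ¬ monomial u (1 : K) ∈ leadTermIdeal m I) →
      SM.card ≤ Module.finrank K (MvPolynomial (Fin n) K ⧸ I) := by
    intro I hJI SM hSM
    haveI := hfin I hJI
    have hli : LinearIndependent K
        (fun u : SM => Ideal.Quotient.mkₐ K I (monomial (u : Fin n →₀ ℕ) (1 : K))) := by
      rw [Fintype.linearIndependent_iff]
      intro c hc u₀
      set f : MvPolynomial (Fin n) K := ∑ u : SM, monomial (u : Fin n →₀ ℕ) (c u) with hf
      have hmk : Ideal.Quotient.mkₐ K I f = 0 := by
        rw [hf, map_sum, ← hc]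
        apply Finset.sum_congr rfl
        intro u _
        rw [← map_smul]
        congr 1
        rw [MvPolynomial.smul_monomial, smul_eq_mul, mul_one]
      have hfmem : f ∈ I := by
        rwa [Ideal.Quotient.mkₐ_eq_mk, Ideal.Quotient.eq_zero_iff_mem] at hmk
      have hcoeff : ∀ u₀ : SM, coeff (u₀ : Fin n →₀ ℕ) f = c u₀ := by
        intro u₁
        rw [hf, MvPolynomial.coeff_sum]
        rw [Finset.sum_eq_single u₁]
        · rw [MvPolynomial.coeff_monomial, if_pos rfl]
        · intro u _ hne
          rw [MvPolynomial.coeff_monomial, if_neg]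
          intro he
          exact hne (Subtype.ext he)
        · intro hmem
          exact absurd (Finset.mem_univ u₁) hmem
      have hsupp : ∀ v : Fin n →₀ ℕ, v ∉ SM → coeff v f = 0 := by
        intro v hv
        rw [hf, MvPolynomial.coeff_sum]
        apply Finset.sum_eq_zero
        intro u _
        rw [MvPolynomial.coeff_monomial, if_neg]
        intro he
        exact hv (he ▸ u.2)
      have hf0 : f = 0 := by
        by_contra hne
        have hmemsup := SocleAux.leadMonomial_mem (m := m) hne
        have hLMSM : leadMonomial m f ∈ SM := by
          by_contra hnot
          exact mem_support_iff.mp hmemsup (hsupp _ hnot)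
        apply hSM _ hLMSM
        rw [SocleAux.mem_leadTermIdeal_iff]
        exact ⟨f, hfmem, hne, le_refl _⟩
      rw [← hcoeff u₀, hf0, coeff_zero]
    have hfc := hli.fintype_card_le_finrank
    rwa [Fintype.card_coe] at hfc
  have hSM1c : SM1.card ≤ Module.finrank K (MvPolynomial (Fin n) K ⧸ I₁) := by
    apply hcard I₁ hJ1
    intro u hu
    exact (Finset.mem_filter.mp hu).2
  have hSM2c : SM2.card ≤ Module.finrank K (MvPolynomial (Fin n) K ⧸ I₂) := by
    apply hcard I₂ hJ2
    intro u hu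
    exact (Finset.mem_filter.mp hu).2
  -- finrank of quotient by J
  haveI hfinJ : Module.Finite K (MvPolynomial (Fin n) K ⧸ J) := hfin J le_rfl
  haveI hfin1 : Module.Finite K (MvPolynomial (Fin n) K ⧸ I₁) := hfin I₁ hJ1
  haveI hfin2 : Module.Finite K (MvPolynomial (Fin n) K ⧸ I₂) := hfin I₂ hJ2
  have hrankJ : Module.finrank K (MvPolynomial (Fin n) K ⧸ J) ≤ boxF.card := by
    have h1 := finrank_span_finset_le_card (R := K)
      (boxF.image (fun t => Ideal.Quotient.mkₐ K J (monomial t (1 : K))))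
    rw [Set.finrank, Finset.coe_image, hspan J le_rfl, finrank_top] at h1
    exact le_trans h1 Finset.card_image_le
  -- CRT
  have hcop : IsCoprime I₁ I₂ := by
    rw [Ideal.isCoprime_iff_sup_eq, ← Submodule.add_eq_sup]
    exact hsup
  have hefst : ∀ x : MvPolynomial (Fin n) K,
      (Ideal.quotientInfEquivQuotientProd I₁ I₂ hcop) (Ideal.Quotient.mk (I₁ ⊓ I₂) x)
        = (Ideal.Quotient.mk I₁ x, Ideal.Quotient.mk I₂ x) := by
    intro x
    have h1 := Ideal.quotientInfEquivQuotientProd_fst I₁ I₂ hcop (Ideal.Quotient.mk _ x)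
    have h2 := Ideal.quotientInfEquivQuotientProd_snd I₁ I₂ hcop (Ideal.Quotient.mk _ x)
    rw [Ideal.Quotient.factor_mk] at h1 h2
    exact Prod.ext h1 h2
  have hsmul : ∀ (I : Ideal (MvPolynomial (Fin n) K)) (c : K) (y),
      (Ideal.Quotient.mk I) (c • y) = c • (Ideal.Quotient.mk I) y := by
    intro I c y
    exact map_smul (Ideal.Quotient.mkₐ K I) c y
  let eL : (MvPolynomial (Fin n) K ⧸ (I₁ ⊓ I₂)) ≃ₗ[K]
      (MvPolynomial (Fin n) K ⧸ I₁) × (MvPolynomial (Fin n) K ⧸ I₂) :=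
    (Ideal.quotientInfEquivQuotientProd I₁ I₂ hcop).toAddEquiv.toLinearEquiv (by
      intro c x
      obtain ⟨y, rfl⟩ := Ideal.Quotient.mk_surjective x
      show (Ideal.quotientInfEquivQuotientProd I₁ I₂ hcop) (c • Ideal.Quotient.mk _ y)
        = c • (Ideal.quotientInfEquivQuotientProd I₁ I₂ hcop) (Ideal.Quotient.mk _ y)
      rw [← hsmul, hefst, hefst, Prod.smul_mk, hsmul, hsmul])
  have hrankeq : Module.finrank K (MvPolynomial (Fin n) K ⧸ I₁)
      + Module.finrank K (MvPolynomial (Fin n) K ⧸ I₂)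
      = Module.finrank K (MvPolynomial (Fin n) K ⧸ J) := by
    have h1 : Module.finrank K (MvPolynomial (Fin n) K ⧸ (I₁ ⊓ I₂))
        = Module.finrank K ((MvPolynomial (Fin n) K ⧸ I₁) × (MvPolynomial (Fin n) K ⧸ I₂)) :=
      eL.finrank_eq
    have h2 : Module.finrank K (MvPolynomial (Fin n) K ⧸ (I₁ ⊓ I₂))
        = Module.finrank K (MvPolynomial (Fin n) K ⧸ J) := by rw [hinf]
    rw [← h2, h1, Module.finrank_prod]
  -- the counting
  have hAFcard : AF.card + SM1.card = boxF.card := by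
    rw [hAF, hSM1]
    exact Finset.card_filter_add_card_filter_not _
  have himg_sub : AF.image (fun t => s - t) ⊆ SM2 := by
    intro u hu
    obtain ⟨t, htA, rfl⟩ := Finset.mem_image.mp hu
    have ht := Finset.mem_filter.mp htA
    have hts : t ≤ s := Finset.mem_Iic.mp ht.1
    refine Finset.mem_filter.mpr ⟨Finset.mem_Iic.mpr tsub_le_self, ?_⟩
    intro hmem
    exact hE t hts ht.2 hmem
  have hinj : Set.InjOn (fun t => s - t) AF := by
    intro t1 h1 t2 h2 he
    have h1s : t1 ≤ s := Finset.mem_Iic.mp (Finset.mem_filter.mp h1).1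
    have h2s : t2 ≤ s := Finset.mem_Iic.mp (Finset.mem_filter.mp h2).1
    have he' : s - t1 = s - t2 := he
    calc t1 = s - (s - t1) := (tsub_tsub_cancel_of_le h1s).symm
    _ = s - (s - t2) := by rw [he']
    _ = t2 := tsub_tsub_cancel_of_le h2s
  have himgcard : (AF.image (fun t => s - t)).card = AF.card :=
    Finset.card_image_of_injOn hinj
  have himg_eq : AF.image (fun t => s - t) = SM2 := by
    apply Finset.eq_of_subset_of_card_le himg_sub
    rw [himgcard]
    omega
  -- conclude
  refine ⟨?_, ?_, ?_⟩
  · intro t ht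
    exact fun hmem => hE t ht.1 ht.2 hmem
  · intro t1 h1 t2 h2 he
    have he' : s - t1 = s - t2 := he
    calc t1 = s - (s - t1) := (tsub_tsub_cancel_of_le h1.1).symm
    _ = s - (s - t2) := by rw [he']
    _ = t2 := tsub_tsub_cancel_of_le h2.1
  · intro u hu
    have hu' : ¬ monomial u (1 : K) ∈ leadTermIdeal m I₂ := hu
    have hus : u ≤ s := by
      by_contra hc
      exact hu' (hout u hc I₂ hJ2)
    have huSM2 : u ∈ SM2 := Finset.mem_filter.mpr ⟨Finset.mem_Iic.mpr hus, hu'⟩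
    rw [← himg_eq] at huSM2
    obtain ⟨t, htA, hteq⟩ := Finset.mem_image.mp huSM2
    have htf := Finset.mem_filter.mp htA
    exact ⟨t, ⟨Finset.mem_Iic.mp htf.1, htf.2⟩, hteq⟩
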